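/- Let ~ be the smallest congruence relation on the polynomial semiring ℕ[X] (compatible with addition and multiplication) containing the relation X ~ 2X + 1. Then every polynomial p = a₀Xⁿ + a₁Xⁿ⁻¹ + ⋯ + aₙ with a₀ ≥ 1 and n ≥ 1 is congruent to a polynomial of the form a·Xⁿ with a ∈ ℕ, a ≥ 1, or of the form Xⁿ + b·Xⁿ⁻¹ with b ∈ ℕ. -/

import Mathlib

open Polynomial

/-- The generating relation `X ~ 2X + 1` on `ℕ[X]`. -/
def morphRel (p q : Polynomial ℕ) : Prop := p = X ∧ q = 2 * X + 1

namespace MS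

noncomputable abbrev c : RingCon (Polynomial ℕ) := ringConGen morphRel

lemma base : c X (2 * X + 1) := RingConGen.Rel.of _ _ ⟨rfl, rfl⟩

lemma addl (q : Polynomial ℕ) {a b : Polynomial ℕ} (h : c a b) : c (q + a) (q + b) :=
  c.add (c.refl q) h

lemma mulX (k : ℕ) : c (X ^ (k + 1)) (2 * X ^ (k + 1) + X ^ k) := by
  have h := c.mul base (c.refl (X ^ k : Polynomial ℕ))
  have h1 : (X : Polynomial ℕ) * X ^ k = X ^ (k + 1) := by ring
  have h2 : ((2 * X + 1 : Polynomial ℕ)) * X ^ k = 2 * X ^ (k + 1) + X ^ k := by ring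
  rwa [h1, h2] at h

lemma emit (k m : ℕ) :
    c (X ^ (k + 1)) (X ^ (k + 1) + C m * (X ^ (k + 1) + X ^ k)) := by
  induction m with
  | zero => simpa using c.refl (X ^ (k + 1) : Polynomial ℕ)
  | succ m ih =>
    refine c.trans ih ?_
    have h := c.add (mulX k) (c.refl (C (m : ℕ) * (X ^ (k + 1) + X ^ k) : Polynomial ℕ))
    have h2 : (2 * X ^ (k + 1) + X ^ k + C (m : ℕ) * (X ^ (k + 1) + X ^ k) : Polynomial ℕ)
        = X ^ (k + 1) + C ((m + 1 : ℕ)) * (X ^ (k + 1) + X ^ k) := by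
      simp only [map_add, map_one, map_ofNat]; ring
    rwa [h2] at h

/-- Emit `m` chunks at level `k`, with coefficients. -/
lemma emitC (k a b m : ℕ) :
    c (C (a + 1) * X ^ (k + 1) + C b * X ^ k)
      (C (a + 1 + m) * X ^ (k + 1) + C (b + m) * X ^ k) := by
  have h := c.add (emit k m) (c.refl (C a * X ^ (k + 1) + C b * X ^ k : Polynomial ℕ))
  have h1 : (X ^ (k + 1) + (C a * X ^ (k + 1) + C b * X ^ k) : Polynomial ℕ)
      = C (a + 1) * X ^ (k + 1) + C b * X ^ k := by
    simp only [map_add, map_one, map_ofNat]; ring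
  have h2 : (X ^ (k + 1) + C (m : ℕ) * (X ^ (k + 1) + X ^ k)
        + (C a * X ^ (k + 1) + C b * X ^ k) : Polynomial ℕ)
      = C (a + 1 + m) * X ^ (k + 1) + C (b + m) * X ^ k := by
    simp only [map_add, map_one, map_ofNat]; ring
  rwa [h1, h2] at h

/-- Diagonal moves between states with positive top coefficient. -/
lemma diag (k a₁ b₁ a₂ b₂ : ℕ) (h : a₁ + 1 + b₂ = a₂ + 1 + b₁) :
    c (C (a₁ + 1) * X ^ (k + 1) + C b₁ * X ^ k)
      (C (a₂ + 1) * X ^ (k + 1) + C b₂ * X ^ k) := by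
  have h1 := emitC k a₁ b₁ a₂
  have h2 := emitC k a₂ b₂ a₁
  have e1 : a₂ + 1 + a₁ = a₁ + 1 + a₂ := by omega
  have e2 : b₂ + a₁ = b₁ + a₂ := by omega
  rw [e1, e2] at h2
  exact c.trans h1 (c.symm h2)

/-- Clear the junk at level `k` using spares from level `k+2`. -/
lemma clear (k a b : ℕ) :
    c (C 2 * X ^ (k + 1 + 1) + C (a + 1) * X ^ (k + 1) + C b * X ^ k)
      (C (b + 2) * X ^ (k + 1 + 1) + C (a + 1) * X ^ (k + 1)) := by
  -- step 1: emit b chunks at level k+1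
  have h1 := c.add (emitC (k + 1) 1 (a + 1) b) (c.refl (C b * X ^ k : Polynomial ℕ))
  have e1 : (C (1 + 1) * X ^ (k + 1 + 1) + C (a + 1) * X ^ (k + 1) + C b * X ^ k : Polynomial ℕ)
      = C 2 * X ^ (k + 1 + 1) + C (a + 1) * X ^ (k + 1) + C b * X ^ k := by norm_num
  rw [e1] at h1
  -- step 2: absorb b chunks at level k
  have h2 := addl (C (1 + 1 + b) * X ^ (k + 1 + 1) : Polynomial ℕ)
    (c.symm (emitC k a 0 b))
  have e2 : (C (1 + 1 + b) * X ^ (k + 1 + 1) + (C (a + 1 + b) * X ^ (k + 1) + C (0 + b) * X ^ k)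
      : Polynomial ℕ)
      = C (1 + 1 + b) * X ^ (k + 1 + 1) + C (a + 1 + b) * X ^ (k + 1) + C b * X ^ k := by
    rw [Nat.zero_add]; ring
  have e3 : (C (1 + 1 + b) * X ^ (k + 1 + 1) + (C (a + 1) * X ^ (k + 1) + C 0 * X ^ k)
      : Polynomial ℕ)
      = C (b + 2) * X ^ (k + 1 + 1) + C (a + 1) * X ^ (k + 1) := by
    have : (1 + 1 + b) = b + 2 := by omega
    rw [this]; simp
  rw [e2, e3] at h2
  exact c.trans h1 h2

lemma key : ∀ n (q : Polynomial ℕ), q.natDegree ≤ n →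
    (∃ a : ℕ, 1 ≤ a ∧ c (X ^ (n + 1) + q) (C a * X ^ (n + 1))) ∨
    (∃ b : ℕ, c (X ^ (n + 1) + q) (X ^ (n + 1) + C b * X ^ n)) := by
  intro n
  induction n with
  | zero =>
    intro q hq
    right
    refine ⟨q.coeff 0, ?_⟩
    conv_lhs => rw [Polynomial.eq_C_of_natDegree_le_zero hq]
    simpa using c.refl (X + C (q.coeff 0) : Polynomial ℕ)
  | succ n ih =>
    intro q hq
    set a := q.coeff (n + 1) with ha
    set q' := q.erase (n + 1) with hq'
    have hqeq : q = C a * X ^ (n + 1) + q' := by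
      rw [C_mul_X_pow_eq_monomial]
      exact (q.monomial_add_erase (n + 1)).symm
    have hq'deg : q'.natDegree ≤ n := by
      rw [Polynomial.natDegree_le_iff_coeff_eq_zero]
      intro m hm
      rw [hq', Polynomial.coeff_erase]
      split
      · rfl
      · rename_i hne
        exact Polynomial.coeff_eq_zero_of_natDegree_lt (lt_of_le_of_lt hq (by omega))
    -- step 1: X^(n+2) + q ~ 2X^(n+2) + C a X^(n+1) + (X^(n+1) + q')
    have step1 : c (X ^ (n + 1 + 1) + q)
        (2 * X ^ (n + 1 + 1) + C a * X ^ (n + 1) + (X ^ (n + 1) + q')) := by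
      have h := c.add (mulX (n + 1)) (c.refl q)
      have e : (2 * X ^ (n + 1 + 1) + X ^ (n + 1) + q : Polynomial ℕ)
          = 2 * X ^ (n + 1 + 1) + C a * X ^ (n + 1) + (X ^ (n + 1) + q') := by
        conv_lhs => rw [hqeq]
        ring
      rwa [e] at h
    rcases ih q' hq'deg with ⟨a', ha', hrel⟩ | ⟨b, hrel⟩
    · -- inner reduces to a' X^(n+1), a' ≥ 1
      obtain ⟨a'', rfl⟩ : ∃ t, a' = t + 1 := ⟨a' - 1, by omega⟩
      have step2 := addl (2 * X ^ (n + 1 + 1) + C a * X ^ (n + 1) : Polynomial ℕ) hrel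
      -- now 2X^(n+2) + C(a + a'' + 1) X^(n+1)
      have e2 : (2 * X ^ (n + 1 + 1) + C a * X ^ (n + 1) + C (a'' + 1) * X ^ (n + 1)
          : Polynomial ℕ)
          = C (1 + 1) * X ^ (n + 1 + 1) + C (a + a'' + 1) * X ^ (n + 1) := by
        simp only [map_add, map_one, map_ofNat]; ring
      rw [e2] at step2
      have step3 := diag (n + 1) 1 (a + a'' + 1) 0 (a + a'') (by omega)
      have e3 : (C (0 + 1) * X ^ (n + 1 + 1) + C (a + a'') * X ^ (n + 1) : Polynomial ℕ)
          = X ^ (n + 1 + 1) + C (a + a'') * X ^ (n + 1) := by norm_num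
      rw [e3] at step3
      right
      exact ⟨a + a'', c.trans (c.trans step1 step2) step3⟩
    · -- inner reduces to X^(n+1) + b X^n
      have step2 := addl (2 * X ^ (n + 1 + 1) + C a * X ^ (n + 1) : Polynomial ℕ) hrel
      have e2 : (2 * X ^ (n + 1 + 1) + C a * X ^ (n + 1) + (X ^ (n + 1) + C b * X ^ n)
          : Polynomial ℕ)
          = C 2 * X ^ (n + 1 + 1) + C (a + 1) * X ^ (n + 1) + C b * X ^ n := by
        simp only [map_add, map_one, map_ofNat]; ring
      rw [e2] at step2
      have step3 := clear n a b
      have upto : c (X ^ (n + 1 + 1) + q)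
          (C (b + 2) * X ^ (n + 1 + 1) + C (a + 1) * X ^ (n + 1)) :=
        c.trans (c.trans step1 step2) step3
      rcases le_or_gt (a + 1) (b + 1) with hle | hlt
      · -- left form: (b+2 - (a+1)) X^(n+2) = (b+1-a) X^(n+2)
        left
        refine ⟨b + 1 - a, by omega, ?_⟩
        have step4 := diag (n + 1) (b + 1) (a + 1) (b - a) 0 (by omega)
        have e4 : (C (b - a + 1) * X ^ (n + 1 + 1) + C 0 * X ^ (n + 1) : Polynomial ℕ)
            = C (b + 1 - a) * X ^ (n + 1 + 1) := by
          have : b - a + 1 = b + 1 - a := by omega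
          rw [this]; simp
        rw [e4] at step4
        exact c.trans upto step4
      · -- right form: X^(n+2) + (a - b) X^(n+1)
        right
        refine ⟨a - b, ?_⟩
        have step4 := diag (n + 1) (b + 1) (a + 1) 0 (a - b) (by omega)
        have e4 : (C (0 + 1) * X ^ (n + 1 + 1) + C (a - b) * X ^ (n + 1) : Polynomial ℕ)
            = X ^ (n + 1 + 1) + C (a - b) * X ^ (n + 1) := by norm_num
        rw [e4] at step4
        exact c.trans upto step4

end MS

theorem morphological_stability (p : Polynomial ℕ) (hn : 1 ≤ p.natDegree) :
    (∃ a : ℕ, 1 ≤ a ∧ ringConGen morphRel p (C a * X ^ p.natDegree)) ∨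
    (∃ b : ℕ, ringConGen morphRel p (X ^ p.natDegree + C b * X ^ (p.natDegree - 1))) := by
  obtain ⟨m, hm⟩ : ∃ m, p.natDegree = m + 1 := ⟨p.natDegree - 1, by omega⟩
  have hp0 : p ≠ 0 := by
    intro h; rw [h] at hn; simp at hn
  have ht : 1 ≤ p.coeff (m + 1) := by
    have h2 : p.coeff p.natDegree ≠ 0 := by
      rw [← Polynomial.leadingCoeff]
      exact Polynomial.leadingCoeff_ne_zero.mpr hp0
    rw [hm] at h2
    omega
  set t := p.coeff (m + 1) with htdef
  obtain ⟨s, hs⟩ : ∃ s, t = s + 1 := ⟨t - 1, by omega⟩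
  set p' := p.erase (m + 1) with hp'
  have hpeq : p = C t * X ^ (m + 1) + p' := by
    rw [C_mul_X_pow_eq_monomial]
    exact (p.monomial_add_erase (m + 1)).symm
  have hp'deg : p'.natDegree ≤ m := by
    rw [Polynomial.natDegree_le_iff_coeff_eq_zero]
    intro k hk
    rw [hp', Polynomial.coeff_erase]
    split
    · rfl
    · rename_i hne
      exact Polynomial.coeff_eq_zero_of_natDegree_lt (by omega)
  rcases MS.key m p' hp'deg with ⟨a', ha', hrel⟩ | ⟨b, hrel⟩
  · left
    refine ⟨s + a', by omega, ?_⟩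
    have h := MS.addl (C s * X ^ (m + 1) : Polynomial ℕ) hrel
    have e1 : (C s * X ^ (m + 1) + (X ^ (m + 1) + p') : Polynomial ℕ) = p := by
      conv_rhs => rw [hpeq, hs]
      simp only [map_add, map_one, map_ofNat]; ring
    have e2 : (C s * X ^ (m + 1) + C a' * X ^ (m + 1) : Polynomial ℕ)
        = C (s + a') * X ^ (m + 1) := by
      simp only [map_add, map_one, map_ofNat]; ring
    rw [e1, e2] at h
    rw [hm]
    exact h
  · have h := MS.addl (C s * X ^ (m + 1) : Polynomial ℕ) hrel
    have e1 : (C s * X ^ (m + 1) + (X ^ (m + 1) + p') : Polynomial ℕ) = p := by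
      conv_rhs => rw [hpeq, hs]
      simp only [map_add, map_one, map_ofNat]; ring
    have e2 : (C s * X ^ (m + 1) + (X ^ (m + 1) + C b * X ^ m) : Polynomial ℕ)
        = C (s + 1) * X ^ (m + 1) + C b * X ^ m := by
      simp only [map_add, map_one, map_ofNat]; ring
    rw [e1, e2] at h
    rcases le_or_gt s b with hle | hlt
    · -- right form: X^(m+1) + (b - s) X^m
      right
      refine ⟨b - s, ?_⟩
      have step := MS.diag m s b 0 (b - s) (by omega)
      have e4 : (C (0 + 1) * X ^ (m + 1) + C (b - s) * X ^ m : Polynomial ℕ)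
          = X ^ (m + 1) + C (b - s) * X ^ m := by norm_num
      rw [e4] at step
      rw [hm]
      simpa using MS.c.trans h step
    · -- left form: (s + 1 - b) X^(m+1)
      left
      refine ⟨s + 1 - b, by omega, ?_⟩
      have step := MS.diag m s b (s - b) 0 (by omega)
      have e4 : (C (s - b + 1) * X ^ (m + 1) + C 0 * X ^ m : Polynomial ℕ)
          = C (s + 1 - b) * X ^ (m + 1) := by
        have : s - b + 1 = s + 1 - b := by omega
        rw [this]; simp
      rw [e4] at step
      rw [hm]
      exact MS.c.trans h step
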